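/- Suppose for each β the momentum P_β(t) is differentiable and satisfies Ṗ_β = −Σ_k (P_β · u_k) ∇ψ_k(Q_β), and the Jacobian J_β(t) is differentiable and satisfies J̇_β v = Σ_k (∇ψ_k(Q_β) · (J_β v)) u_k for all v ∈ ℝ². Then for each β the quantity J_β(t)ᵀ P_β(t) is conserved: for every fixed v ∈ ℝ², the scalar function t ↦ P_β(t) · (J_β(t) v) is constant in time. -/

import Mathlib

open scoped RealInnerProductSpace BigOperators

/-- If the momenta satisfy `Ṗ_β = −Σ_k (P_β · u_k) ∇ψ_k(Q_β)` and the Jacobians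
satisfy `J̇_β v = Σ_k (∇ψ_k(Q_β) · (J_β v)) u_k`, then for each `β` the quantity `J_βᵀ P_β`
is conserved: for every fixed `v`, the scalar `t ↦ P_β(t) · (J_β(t) v)` is constant in time. -/
theorem variational_particle_mesh_momentum_conservation
    {np ng : ℕ}
    (ψ : Fin ng → EuclideanSpace ℝ (Fin 2) → ℝ)
    (hψ : ∀ k, Differentiable ℝ (ψ k))
    (Q P : Fin np → ℝ → EuclideanSpace ℝ (Fin 2))
    (u : Fin ng → ℝ → EuclideanSpace ℝ (Fin 2))
    (J : Fin np → ℝ → (EuclideanSpace ℝ (Fin 2) →L[ℝ] EuclideanSpace ℝ (Fin 2)))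
    (hP : ∀ β t,
      HasDerivAt (P β)
        (-∑ k, ⟪P β t, u k t⟫ • gradient (ψ k) (Q β t)) t)
    (hJ : ∀ β t (w : EuclideanSpace ℝ (Fin 2)),
      HasDerivAt (fun τ => J β τ w)
        (∑ k, ⟪gradient (ψ k) (Q β t), J β t w⟫ • u k t) t) :
    ∀ (β : Fin np) (v : EuclideanSpace ℝ (Fin 2)) (t₁ t₂ : ℝ),
      ⟪P β t₁, J β t₁ v⟫ = ⟪P β t₂, J β t₂ v⟫ := by
  intro β v t₁ t₂
  have key : ∀ t : ℝ, HasDerivAt (fun τ => ⟪P β τ, J β τ v⟫) 0 t := by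
    intro t
    have h := (hP β t).inner ℝ (hJ β t v)
    convert h using 1
    case e'_4 => rfl
    case e'_5 => rfl
    rw [inner_sum, inner_neg_left, sum_inner]
    simp only [real_inner_smul_right, real_inner_smul_left]
    rw [← Finset.sum_neg_distrib, ← Finset.sum_add_distrib]
    symm
    apply Finset.sum_eq_zero
    intro k _
    ring
  have hconst := is_const_of_deriv_eq_zero (𝕜 := ℝ)
    (f := fun τ => ⟪P β τ, J β τ v⟫)
    (fun x => (key x).differentiableAt) (fun x => (key x).deriv)
  exact hconst t₁ t₂
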